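/- arXiv:1809.08864 — 2 statements merged into one kernel-verified Lean document; each statement's English description precedes it below -/
import Mathlib

section
/- Let m ≥ 1 and let l_1, …, l_m be positive integers with l_1 + ⋯ + l_m = N. There exists a constant C > 0 (depending only on N) such that for every integer p ≥ 1 and every z = (z^{(1)}, …, z^{(m)}) with z^{(j)} ∈ ℂ^{l_j}, one has ∑ ∏_{j=1}^m ((l_j - 1 + |β_j|)! / ((l_j - 1)! · β_j!)) · |(z^{(j)})^{β_j}|^2 ≤ C · p^{2N} · (max_{1 ≤ j ≤ m} ‖z^{(j)}‖_2)^{2p}, where the sum runs over all m-tuples (β_1, …, β_m) of multi-indices, β_j ∈ ℕ^{l_j}, with |β_1| + ⋯ + |β_m| = p. -/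
lemma myBall_eq (k q : ℕ) (z : Fin k → ℂ) :
    ∑ β ∈ Finset.Nat.antidiagonalTuple k q,
      ((Nat.factorial (k - 1 + ∑ i, β i) : ℝ) /
        ((Nat.factorial (k - 1) : ℝ) * ∏ i, (Nat.factorial (β i) : ℝ))) *
        ‖∏ i, z i ^ β i‖ ^ 2
    = ((k - 1 + q).choose q : ℝ) * (∑ i, ‖z i‖ ^ 2) ^ q := by
  rw [Finset.sum_pow_eq_sum_piAntidiag Finset.univ (fun i => ‖z i‖ ^ 2) q,
      Finset.piAntidiag_univ_fin_eq_antidiagonalTuple q k, Finset.mul_sum]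
  refine Finset.sum_congr rfl fun β hβ => ?_
  have hq : ∑ i, β i = q := Finset.Nat.mem_antidiagonalTuple.mp hβ
  have h1 : ‖∏ i, z i ^ β i‖ ^ 2 = ∏ i, (‖z i‖ ^ 2) ^ β i := by
    rw [norm_prod, ← Finset.prod_pow]
    exact Finset.prod_congr rfl fun i _ => by
      rw [norm_pow, ← pow_mul, ← pow_mul, mul_comm]
  have hprodne : (∏ i, (Nat.factorial (β i) : ℝ)) ≠ 0 := by positivity
  have hspec := Nat.multinomial_spec Finset.univ β
  rw [hq] at hspec
  have hmult : (Nat.multinomial Finset.univ β : ℝ)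
      = (Nat.factorial q : ℝ) / ∏ i, (Nat.factorial (β i) : ℝ) := by
    rw [eq_div_iff hprodne, mul_comm]
    exact_mod_cast congrArg (Nat.cast (R := ℝ)) hspec
  have hchoose : (((k - 1 + q).choose q : ℕ) : ℝ)
      = ((k - 1 + q).factorial : ℝ) / ((Nat.factorial q : ℝ) * ((k - 1).factorial : ℝ)) := by
    rw [Nat.cast_choose ℝ (Nat.le_add_left q (k - 1)), Nat.add_sub_cancel]
  rw [hq, h1, hmult, hchoose]
  have h2 : (Nat.factorial q : ℝ) ≠ 0 := by positivity
  have h3 : ((k - 1).factorial : ℝ) ≠ 0 := by positivity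
  field_simp

/-- Let `l_1, …, l_m` be positive integers with `l_1 + ⋯ + l_m = N`. There is a constant
`C > 0` (depending only on `N`) such that for every `p ≥ 1` and every
`z = (z^{(1)}, …, z^{(m)})` with `z^{(j)} ∈ ℂ^{l_j}`, the sum over all tuples
`(β_1, …, β_m)` of multi-indices with `|β_1| + ⋯ + |β_m| = p` of
`∏_j ((l_j - 1 + |β_j|)!/((l_j - 1)!·β_j!)) |(z^{(j)})^{β_j}|²` is at most
`C · p^(2N) · (max_j ‖z^{(j)}‖₂)^(2p)`. The tuples are enumerated by first choosing
`q = (|β_1|, …, |β_m|)` with `∑ q_j = p` and then each `β_j` with `|β_j| = q_j`. -/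
theorem stmt8 (N m : ℕ) (hm : 1 ≤ m) (l : Fin m → ℕ) (hl : ∀ j, 1 ≤ l j)
    (hsum : ∑ j, l j = N) :
    ∃ C : ℝ, 0 < C ∧ ∀ p : ℕ, 1 ≤ p → ∀ z : (j : Fin m) → Fin (l j) → ℂ,
      ∑ q ∈ Finset.Nat.antidiagonalTuple m p,
        ∑ β ∈ Fintype.piFinset (fun j => Finset.Nat.antidiagonalTuple (l j) (q j)),
          ∏ j, (((Nat.factorial (l j - 1 + ∑ i, β j i) : ℝ) /
                ((Nat.factorial (l j - 1) : ℝ) * ∏ i, (Nat.factorial (β j i) : ℝ))) *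
              ‖∏ i, z j i ^ β j i‖ ^ 2)
        ≤ C * (p : ℝ) ^ (2 * N) *
            (⨆ j, Real.sqrt (∑ i, ‖z j i‖ ^ 2)) ^ (2 * p) := by
  have hN : 1 ≤ N := by
    rw [← hsum]
    calc 1 ≤ l ⟨0, hm⟩ := hl _
      _ ≤ ∑ j, l j := Finset.single_le_sum (fun j _ => Nat.zero_le _) (Finset.mem_univ _)
  refine ⟨(2 * (N : ℝ)) ^ N, by positivity, fun p hp z => ?_⟩
  set M := ⨆ j, Real.sqrt (∑ i, ‖z j i‖ ^ 2) with hMdef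
  have hM0 : 0 ≤ M := le_trans (Real.sqrt_nonneg _)
    (le_ciSup (f := fun j => Real.sqrt (∑ i, ‖z j i‖ ^ 2))
      (Finite.bddAbove_range _) (⟨0, hm⟩ : Fin m))
  have hball : ∀ j, (∑ i, ‖z j i‖ ^ 2) ≤ M ^ 2 := by
    intro j
    have h1 : Real.sqrt (∑ i, ‖z j i‖ ^ 2) ≤ M :=
      le_ciSup (f := fun j => Real.sqrt (∑ i, ‖z j i‖ ^ 2))
        (Finite.bddAbove_range _) j
    calc ∑ i, ‖z j i‖ ^ 2
        = Real.sqrt (∑ i, ‖z j i‖ ^ 2) ^ 2 :=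
          (Real.sq_sqrt (by positivity)).symm
      _ ≤ M ^ 2 := pow_le_pow_left₀ (Real.sqrt_nonneg _) h1 2
  -- the exponent K = ∑ (l j - 1)
  set K : ℕ := ∑ j, (l j - 1) with hKdef
  have hK : K + m = N := by
    have h1 : ∑ j : Fin m, ((l j - 1) + 1) = ∑ j : Fin m, l j :=
      Finset.sum_congr rfl fun j _ => Nat.sub_add_cancel (hl j)
    rw [Finset.sum_add_distrib, Finset.sum_const, smul_eq_mul, mul_one, Finset.card_univ,
      Fintype.card_fin, hsum] at h1
    exact h1
  set D : ℕ := 2 * N * p with hDdef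
  have hD1 : 1 ≤ D := Nat.mul_pos (Nat.mul_pos (by norm_num) hN) hp
  -- termwise bound
  have hterm : ∀ q ∈ Finset.Nat.antidiagonalTuple m p,
      (∑ β ∈ Fintype.piFinset (fun j => Finset.Nat.antidiagonalTuple (l j) (q j)),
        ∏ j, (((Nat.factorial (l j - 1 + ∑ i, β j i) : ℝ) /
              ((Nat.factorial (l j - 1) : ℝ) * ∏ i, (Nat.factorial (β j i) : ℝ))) *
            ‖∏ i, z j i ^ β j i‖ ^ 2))
      ≤ (D : ℝ) ^ K * M ^ (2 * p) := by
    intro q hq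
    have hqsum : ∑ j, q j = p := Finset.Nat.mem_antidiagonalTuple.mp hq
    have hqle : ∀ j, q j ≤ p := fun j => hqsum ▸
      Finset.single_le_sum (fun j _ => Nat.zero_le _) (Finset.mem_univ j)
    have hflip := Finset.prod_univ_sum (fun j => Finset.Nat.antidiagonalTuple (l j) (q j))
      (fun j b => (((Nat.factorial (l j - 1 + ∑ i, b i) : ℝ) /
              ((Nat.factorial (l j - 1) : ℝ) * ∏ i, (Nat.factorial (b i) : ℝ))) *
            ‖∏ i, z j i ^ b i‖ ^ 2))
    rw [← hflip]
    have hstep : ∀ j, (∑ β ∈ Finset.Nat.antidiagonalTuple (l j) (q j),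
        (((Nat.factorial (l j - 1 + ∑ i, β i) : ℝ) /
              ((Nat.factorial (l j - 1) : ℝ) * ∏ i, (Nat.factorial (β i) : ℝ))) *
            ‖∏ i, z j i ^ β i‖ ^ 2))
        ≤ (D : ℝ) ^ (l j - 1) * M ^ (2 * q j) := by
      intro j
      rw [myBall_eq (l j) (q j) (z j)]
      have hlj : l j ≤ N := hsum ▸
        Finset.single_le_sum (fun j _ => Nat.zero_le _) (Finset.mem_univ j)
      have hbase : l j - 1 + q j ≤ D := by
        have h1 : l j - 1 + q j ≤ N + p :=
          Nat.add_le_add (le_trans (Nat.sub_le _ _) hlj) (hqle j)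
        have h2 : N + p ≤ 2 * N * p := by
          have hNp : N ≤ N * p := Nat.le_mul_of_pos_right N hp
          have hpN : p ≤ N * p := by
            calc p = 1 * p := (one_mul p).symm
              _ ≤ N * p := Nat.mul_le_mul_right p hN
          have hring : 2 * N * p = N * p + N * p := by ring
          omega
        exact le_trans h1 h2
      have hc : ((l j - 1 + q j).choose (q j) : ℝ) ≤ (D : ℝ) ^ (l j - 1) := by
        have h1 : (l j - 1 + q j).choose (q j) ≤ D ^ (l j - 1) := by
          calc (l j - 1 + q j).choose (q j)
              = (l j - 1 + q j).choose (l j - 1) := by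
                rw [Nat.choose_symm_add]
            _ ≤ (l j - 1 + q j) ^ (l j - 1) := Nat.choose_le_pow _ _
            _ ≤ D ^ (l j - 1) := Nat.pow_le_pow_left hbase _
        exact_mod_cast h1
      have hs : (∑ i, ‖z j i‖ ^ 2) ^ (q j) ≤ M ^ (2 * q j) := by
        calc (∑ i, ‖z j i‖ ^ 2) ^ (q j)
            ≤ (M ^ 2) ^ (q j) := pow_le_pow_left₀ (by positivity) (hball j) _
          _ = M ^ (2 * q j) := by rw [← pow_mul]
      exact mul_le_mul hc hs (by positivity) (by positivity)
    calc ∏ j, (∑ β ∈ Finset.Nat.antidiagonalTuple (l j) (q j),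
          (((Nat.factorial (l j - 1 + ∑ i, β i) : ℝ) /
                ((Nat.factorial (l j - 1) : ℝ) * ∏ i, (Nat.factorial (β i) : ℝ))) *
              ‖∏ i, z j i ^ β i‖ ^ 2))
        ≤ ∏ j, ((D : ℝ) ^ (l j - 1) * M ^ (2 * q j)) := by
          refine Finset.prod_le_prod (fun j _ => ?_) (fun j _ => hstep j)
          rw [myBall_eq (l j) (q j) (z j)]
          positivity
      _ = (D : ℝ) ^ K * M ^ (2 * p) := by
          rw [Finset.prod_mul_distrib, Finset.prod_pow_eq_pow_sum,
            Finset.prod_pow_eq_pow_sum, ← Finset.mul_sum, hqsum]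
  -- cardinality bound
  have hcard : (Finset.Nat.antidiagonalTuple m p).card ≤ D ^ m := by
    have hsub : Finset.Nat.antidiagonalTuple m p ⊆
        Fintype.piFinset (fun _ : Fin m => Finset.range (p + 1)) := by
      intro q hq
      have hqsum : ∑ j, q j = p := Finset.Nat.mem_antidiagonalTuple.mp hq
      rw [Fintype.mem_piFinset]
      intro j
      rw [Finset.mem_range]
      have : q j ≤ p := hqsum ▸
        Finset.single_le_sum (fun j _ => Nat.zero_le _) (Finset.mem_univ j)
      omega
    calc (Finset.Nat.antidiagonalTuple m p).card
        ≤ (Fintype.piFinset (fun _ : Fin m => Finset.range (p + 1))).card :=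
          Finset.card_le_card hsub
      _ = (p + 1) ^ m := by simp [Fintype.card_piFinset]
      _ ≤ D ^ m := by
          refine Nat.pow_le_pow_left ?_ m
          have hNp : p ≤ N * p := by
            calc p = 1 * p := (one_mul p).symm
              _ ≤ N * p := Nat.mul_le_mul_right p hN
          have hring : 2 * N * p = N * p + N * p := by ring
          omega
  -- put everything together
  calc ∑ q ∈ Finset.Nat.antidiagonalTuple m p,
        ∑ β ∈ Fintype.piFinset (fun j => Finset.Nat.antidiagonalTuple (l j) (q j)),
          ∏ j, (((Nat.factorial (l j - 1 + ∑ i, β j i) : ℝ) /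
                ((Nat.factorial (l j - 1) : ℝ) * ∏ i, (Nat.factorial (β j i) : ℝ))) *
              ‖∏ i, z j i ^ β j i‖ ^ 2)
      ≤ (Finset.Nat.antidiagonalTuple m p).card • ((D : ℝ) ^ K * M ^ (2 * p)) :=
        Finset.sum_le_card_nsmul _ _ _ hterm
    _ = ((Finset.Nat.antidiagonalTuple m p).card : ℝ) * ((D : ℝ) ^ K * M ^ (2 * p)) := by
        rw [nsmul_eq_mul]
    _ ≤ ((D : ℝ) ^ m) * ((D : ℝ) ^ K * M ^ (2 * p)) := by
        refine mul_le_mul_of_nonneg_right ?_ (by positivity)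
        exact_mod_cast hcard
    _ = (D : ℝ) ^ N * M ^ (2 * p) := by
        rw [← mul_assoc, ← pow_add]
        rw [show m + K = N by omega]
    _ ≤ (2 * (N : ℝ)) ^ N * (p : ℝ) ^ (2 * N) * M ^ (2 * p) := by
        refine mul_le_mul_of_nonneg_right ?_ (by positivity)
        have hDcast : (D : ℝ) = (2 * (N : ℝ)) * (p : ℝ) := by
          rw [hDdef]; push_cast; ring
        rw [hDcast, mul_pow]
        refine mul_le_mul_of_nonneg_left ?_ (by positivity)
        have hp1 : (1 : ℝ) ≤ (p : ℝ) := by exact_mod_cast hp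
        exact pow_le_pow_right₀ hp1 (by omega)
end

section
/- There is no constant C > 0 such that for every polynomial P ∈ ℂ[X, Y] one has (1/(2π)) ∫_0^{2π} |P(e^{is}, e^{is})|^2 ds ≤ C · (1/(2π)^2) ∫_0^{2π} ∫_0^{2π} |P(e^{is}, e^{it})|^2 ds dt. -/
open Complex intervalIntegral Finset

lemma int_exp (m : ℤ) :
    (∫ t in (0:ℝ)..(2*Real.pi), Complex.exp (Complex.I * m * t)) =
      if m = 0 then (2*Real.pi : ℂ) else 0 := by
  split_ifs with h
  · simp [h, intervalIntegral.integral_const]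
  · have hc : Complex.I * m ≠ 0 := by
      apply mul_ne_zero Complex.I_ne_zero
      exact_mod_cast h
    have := integral_exp_mul_complex (a := 0) (b := 2*Real.pi) hc
    rw [this]
    have h1 : Complex.I * m * ((2:ℝ)*Real.pi : ℝ) = m * (2 * Real.pi * Complex.I) := by
      push_cast; ring
    rw [h1, Complex.exp_int_mul_two_pi_mul_I]
    simp

lemma key (n : ℕ) (c : ℕ → ℂ) (e : ℕ → ℕ)
    (he : ∀ j ∈ Finset.range n, ∀ k ∈ Finset.range n, e j = e k → j = k) :
    (∫ t in (0:ℝ)..(2*Real.pi),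
        ‖∑ j ∈ Finset.range n, c j * Complex.exp (Complex.I * t) ^ (e j)‖ ^ 2)
      = 2*Real.pi * ∑ j ∈ Finset.range n, ‖c j‖ ^ 2 := by
  have hpt : ∀ t : ℝ,
      ‖∑ j ∈ Finset.range n, c j * Complex.exp (Complex.I * t) ^ (e j)‖ ^ 2
      = (∑ j ∈ Finset.range n, ∑ k ∈ Finset.range n,
          c j * (starRingEnd ℂ) (c k) *
            Complex.exp (Complex.I * (((e j : ℤ) - (e k : ℤ)) : ℂ) * t)).re := by
    intro t
    rw [Complex.sq_norm]
    have h0 : ∀ z : ℂ, Complex.normSq z = (z * (starRingEnd ℂ) z).re := by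
      intro z; rw [Complex.mul_conj, Complex.ofReal_re]
    rw [h0]
    congr 1
    rw [map_sum, Finset.sum_mul_sum]
    refine Finset.sum_congr rfl fun j hj => Finset.sum_congr rfl fun k hk => ?_
    rw [map_mul, map_pow, ← Complex.exp_conj]
    have h1 : (starRingEnd ℂ) (Complex.I * t) = -(Complex.I * t) := by
      simp [Complex.conj_I]
    rw [h1, ← Complex.exp_nat_mul, ← Complex.exp_nat_mul, mul_mul_mul_comm,
      ← Complex.exp_add]
    congr 2
    push_cast
    ring
  rw [intervalIntegral.integral_congr (g := fun t => (∑ j ∈ Finset.range n, ∑ k ∈ Finset.range n,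
      c j * (starRingEnd ℂ) (c k) *
        Complex.exp (Complex.I * (((e j : ℤ) - (e k : ℤ)) : ℂ) * t)).re)
    (fun t _ => hpt t)]
  have hint : ∀ (j k : ℕ), IntervalIntegrable
      (fun t : ℝ => c j * (starRingEnd ℂ) (c k) *
        Complex.exp (Complex.I * (((e j : ℤ) - (e k : ℤ)) : ℂ) * t)) MeasureTheory.volume 0 (2*Real.pi) := by
    intro j k
    apply Continuous.intervalIntegrable
    fun_prop
  have hsum : IntervalIntegrable (fun t : ℝ => ∑ j ∈ Finset.range n, ∑ k ∈ Finset.range n,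
      c j * (starRingEnd ℂ) (c k) *
        Complex.exp (Complex.I * (((e j : ℤ) - (e k : ℤ)) : ℂ) * t)) MeasureTheory.volume 0 (2*Real.pi) := by
    apply Continuous.intervalIntegrable
    fun_prop
  have hre := ContinuousLinearMap.intervalIntegral_comp_comm Complex.reCLM hsum
  simp only [Complex.reCLM_apply] at hre
  rw [hre]
  have hswap : (∫ t in (0:ℝ)..(2*Real.pi), ∑ j ∈ Finset.range n, ∑ k ∈ Finset.range n,
      c j * (starRingEnd ℂ) (c k) *
        Complex.exp (Complex.I * (((e j : ℤ) - (e k : ℤ)) : ℂ) * t))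
      = ∑ j ∈ Finset.range n, ∑ k ∈ Finset.range n,
        c j * (starRingEnd ℂ) (c k) *
          (if ((e j : ℤ) - (e k : ℤ)) = 0 then (2*Real.pi : ℂ) else 0) := by
    rw [intervalIntegral.integral_finset_sum (fun j _ => by
      apply Continuous.intervalIntegrable; fun_prop)]
    refine Finset.sum_congr rfl fun j hj => ?_
    rw [intervalIntegral.integral_finset_sum (fun k _ => hint j k)]
    refine Finset.sum_congr rfl fun k hk => ?_
    rw [intervalIntegral.integral_const_mul]
    have h2 := int_exp ((e j : ℤ) - (e k : ℤ))
    push_cast at h2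
    push_cast
    rw [h2]
  rw [hswap]
  have hdiag : ∀ j ∈ Finset.range n, (∑ k ∈ Finset.range n,
      c j * (starRingEnd ℂ) (c k) *
        (if ((e j : ℤ) - (e k : ℤ)) = 0 then (2*Real.pi : ℂ) else 0))
      = c j * (starRingEnd ℂ) (c j) * (2*Real.pi : ℂ) := by
    intro j hj
    rw [Finset.sum_eq_single j]
    · simp
    · intro k hk hkj
      have : ¬ ((e j : ℤ) - (e k : ℤ) = 0) := by
        intro hh
        exact hkj ((he k hk j hj (by omega)))
      simp [this]
    · intro hj'; exact absurd hj hj'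
  rw [Finset.sum_congr rfl hdiag, Complex.re_sum]
  rw [Finset.mul_sum]
  refine Finset.sum_congr rfl fun j hj => ?_
  rw [Complex.mul_conj]
  rw [Complex.sq_norm]
  norm_num [Complex.normSq_nonneg]
  ring

/-- There is no constant `C > 0` such that for every polynomial `P ∈ ℂ[X, Y]` one has
`(1/(2π)) ∫₀^{2π} |P(e^{is}, e^{is})|² ds ≤ C · (1/(2π)²) ∫₀^{2π}∫₀^{2π} |P(e^{is}, e^{it})|² ds dt`,
i.e. the Schur map `φ(z₁, z₂) = (z₁, z₁)` does not induce a bounded composition operator on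
`H²(𝔻²)`. -/
theorem stmt10 :
    ¬ ∃ C : ℝ, 0 < C ∧ ∀ P : MvPolynomial (Fin 2) ℂ,
      (1 / (2 * Real.pi)) *
          (∫ s in (0:ℝ)..(2 * Real.pi),
            ‖MvPolynomial.eval (fun _ => Complex.exp (Complex.I * (s : ℂ))) P‖ ^ 2)
        ≤ C * ((1 / (2 * Real.pi) ^ 2) *
          (∫ s in (0:ℝ)..(2 * Real.pi), ∫ t in (0:ℝ)..(2 * Real.pi),
            ‖MvPolynomial.eval
                ![Complex.exp (Complex.I * (s : ℂ)), Complex.exp (Complex.I * (t : ℂ))] P‖ ^ 2)) := by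
  rintro ⟨C, hC, h⟩
  set n : ℕ := ⌈C⌉₊ with hn
  set P : MvPolynomial (Fin 2) ℂ :=
    ∑ j ∈ Finset.range (n+1), MvPolynomial.X 0 ^ j * MvPolynomial.X 1 ^ (n - j) with hP
  have hpi : (0:ℝ) < Real.pi := Real.pi_pos
  have habs1 : ∀ s : ℝ, ‖Complex.exp (Complex.I * s)‖ = 1 := by
    intro s; rw [Complex.norm_exp]; simp
  -- LHS evaluation
  have hevalL : ∀ s : ℝ,
      MvPolynomial.eval (fun _ => Complex.exp (Complex.I * (s:ℂ))) P
        = ((n:ℂ)+1) * Complex.exp (Complex.I * s) ^ n := by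
    intro s
    rw [hP, map_sum]
    have hterm : ∀ j ∈ Finset.range (n+1),
        MvPolynomial.eval (fun _ => Complex.exp (Complex.I * (s:ℂ)))
          (MvPolynomial.X 0 ^ j * MvPolynomial.X 1 ^ (n-j) : MvPolynomial (Fin 2) ℂ)
          = Complex.exp (Complex.I * s) ^ n := by
      intro j hj
      simp only [map_mul, map_pow, MvPolynomial.eval_X, ← pow_add]
      congr 1
      simp only [Finset.mem_range] at hj
      omega
    rw [Finset.sum_congr rfl hterm, Finset.sum_const, Finset.card_range, nsmul_eq_mul]
    push_cast
    ring
  have hL : (∫ s in (0:ℝ)..(2 * Real.pi),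
      ‖MvPolynomial.eval (fun _ => Complex.exp (Complex.I * (s:ℂ))) P‖ ^ 2)
      = 2*Real.pi * ((n:ℝ)+1)^2 := by
    rw [intervalIntegral.integral_congr (g := fun _ : ℝ => ((n:ℝ)+1)^2)
      (fun s _ => by
        rw [hevalL s]
        have hx : ‖(n:ℂ)+1‖ = (n:ℝ)+1 := by
          rw [show ((n:ℂ)+1) = (((n+1:ℕ):ℂ)) by push_cast; ring, Complex.norm_natCast]
          push_cast; ring
        simp [map_mul, map_pow, habs1 s, hx])]
    rw [intervalIntegral.integral_const, smul_eq_mul]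
    ring
  -- RHS evaluation
  have hevalR : ∀ s t : ℝ,
      MvPolynomial.eval ![Complex.exp (Complex.I * (s:ℂ)), Complex.exp (Complex.I * (t:ℂ))] P
        = ∑ j ∈ Finset.range (n+1),
            Complex.exp (Complex.I * s) ^ j * Complex.exp (Complex.I * t) ^ (n-j) := by
    intro s t
    rw [hP, map_sum]
    simp [MvPolynomial.eval_X]
  have hinner : ∀ s : ℝ, (∫ t in (0:ℝ)..(2 * Real.pi),
      ‖MvPolynomial.eval
        ![Complex.exp (Complex.I * (s:ℂ)), Complex.exp (Complex.I * (t:ℂ))] P‖ ^ 2)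
      = 2*Real.pi * ((n:ℝ)+1) := by
    intro s
    rw [intervalIntegral.integral_congr (g := fun t : ℝ =>
      ‖∑ j ∈ Finset.range (n+1),
        Complex.exp (Complex.I * s) ^ j * Complex.exp (Complex.I * t) ^ (n-j)‖ ^ 2)
      (fun t _ => by rw [hevalR s t])]
    rw [key (n+1) (fun j => Complex.exp (Complex.I * s) ^ j) (fun j => n - j)
      (by intro j hj k hk hjk; simp only [Finset.mem_range] at hj hk; omega)]
    have : ∀ j ∈ Finset.range (n+1),
        ‖Complex.exp (Complex.I * s) ^ j‖ ^ 2 = (1:ℝ) := by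
      intro j hj
      rw [norm_pow, habs1 s]
      simp
    rw [Finset.sum_congr rfl this, Finset.sum_const, Finset.card_range, nsmul_eq_mul]
    push_cast
    ring
  have hR : (∫ s in (0:ℝ)..(2 * Real.pi), ∫ t in (0:ℝ)..(2 * Real.pi),
      ‖MvPolynomial.eval
        ![Complex.exp (Complex.I * (s:ℂ)), Complex.exp (Complex.I * (t:ℂ))] P‖ ^ 2)
      = 2*Real.pi * (2*Real.pi * ((n:ℝ)+1)) := by
    rw [intervalIntegral.integral_congr (g := fun _ : ℝ => 2*Real.pi * ((n:ℝ)+1))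
      (fun s _ => hinner s)]
    rw [intervalIntegral.integral_const, smul_eq_mul]
    ring
  have hfin := h P
  rw [hL, hR] at hfin
  have e1 : (1 / (2 * Real.pi)) * (2*Real.pi * ((n:ℝ)+1)^2) = ((n:ℝ)+1)^2 := by
    field_simp
  have e2 : (1 / (2 * Real.pi) ^ 2) * (2*Real.pi * (2*Real.pi * ((n:ℝ)+1))) = ((n:ℝ)+1) := by
    field_simp
  rw [e1, e2] at hfin
  have hC' : C ≤ (n:ℝ) := Nat.le_ceil C
  nlinarith [hC', hfin, sq_nonneg ((n:ℝ)+1)]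
end
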